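/- Generalized Young inequality for mixed discrete–continuous convolution: let 1 ≤ q, r ≤ p ≤ ∞ satisfy 1 + 1/p = 1/q + 1/r. Let K : ℤ × [−π,π] → ℝ be measurable with A_∞ := sup_{j∈ℤ} sup_{|y|≤π} |K(j,y)| < ∞ and A₁ := sup_{|y|≤π} Σ_{j∈ℤ} |K(j,y)| < ∞, and let W = (W_k)_{k∈ℤ} with W_k ∈ L^q((−π,π),ℝ) and ‖W‖_{X_q} := (Σ_k ‖W_k‖_{L^q(−π,π)}^q)^{1/q} < ∞ (with the supremum convention when q = ∞). Define (K ⋆ W)_j = Σ_{k∈ℤ} ∫_{−π}^{π} K(j−k, y) W_k(y) dy. Then there is a constant C depending only on p, q, r (one may take C = (2π)^{1−1/q}) such that ‖K ⋆ W‖_{ℓ^p(ℤ)} ≤ C · A_∞^{1/q − 1/p} · A₁^{1/r} · ‖W‖_{X_q}. -/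

import Mathlib

open Real MeasureTheory
open scoped ENNReal

/-- The `ℓ^q` norm of an `ℝ≥0∞`-valued sequence (with the supremum convention
at `q = ∞`). -/
noncomputable def lqNormSeq (q : ℝ≥0∞) (a : ℤ → ℝ≥0∞) : ℝ≥0∞ :=
  if q = ∞ then ⨆ j, a j else (∑' j, a j ^ q.toReal) ^ (1 / q.toReal)

lemma ofReal_abs_tsum_le (u : ℤ → ℝ) :
    ENNReal.ofReal |∑' k, u k| ≤ ∑' k, ENNReal.ofReal |u k| := by
  by_cases h : Summable u
  · calc ENNReal.ofReal |∑' k, u k| ≤ ENNReal.ofReal (∑' k, |u k|) := by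
          apply ENNReal.ofReal_le_ofReal
          simpa [Real.norm_eq_abs] using norm_tsum_le_tsum_norm (f := u)
            (by simpa [Real.norm_eq_abs] using h.abs)
    _ = ∑' k, ENNReal.ofReal |u k| :=
          ENNReal.ofReal_tsum_of_nonneg (fun k => abs_nonneg _) h.abs
  · rw [tsum_eq_zero_of_not_summable h]; simp

lemma ofReal_abs_integral_le {ν : Measure ℝ} (f : ℝ → ℝ) :
    ENNReal.ofReal |∫ y, f y ∂ν| ≤ ∫⁻ y, ENNReal.ofReal |f y| ∂ν := by
  rw [← Real.enorm_eq_ofReal_abs]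
  calc ‖∫ y, f y ∂ν‖ₑ ≤ ∫⁻ y, ‖f y‖ₑ ∂ν :=
        enorm_integral_le_lintegral_enorm f
  _ = ∫⁻ y, ENNReal.ofReal |f y| ∂ν := by
        simp_rw [Real.enorm_eq_ofReal_abs]

set_option maxHeartbeats 2000000 in
/-- Generalized Young inequality for mixed discrete–continuous
convolution. -/
theorem generalized_young_mixed_convolution
    (p q r : ℝ≥0∞) (hq1 : 1 ≤ q) (hr1 : 1 ≤ r) (hqp : q ≤ p) (hrp : r ≤ p)
    (hpqr : 1 + 1 / p = 1 / q + 1 / r) :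
    ∃ C > (0:ℝ), ∀ (K : ℤ → ℝ → ℝ) (Ainf A1 : ℝ) (W : ℤ → ℝ → ℝ),
      Measurable (Function.uncurry K) →
      (∀ j : ℤ, ∀ y ∈ Set.Icc (-π) π, |K j y| ≤ Ainf) →
      (∀ y ∈ Set.Icc (-π) π,
        Summable (fun j : ℤ => |K j y|) ∧ (∑' j : ℤ, |K j y|) ≤ A1) →
      (∀ k : ℤ, MemLp (W k) q (volume.restrict (Set.Ioo (-π) π))) →
      lqNormSeq q (fun k => eLpNorm (W k) q (volume.restrict (Set.Ioo (-π) π))) < ∞ →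
      lqNormSeq p (fun j =>
          ENNReal.ofReal |∑' k : ℤ, ∫ y in Set.Ioo (-π) π, K (j - k) y * W k y|)
        ≤ ENNReal.ofReal C * ENNReal.ofReal Ainf ^ (1 / q - 1 / p).toReal
            * ENNReal.ofReal A1 ^ (1 / r).toReal
            * lqNormSeq q (fun k => eLpNorm (W k) q (volume.restrict (Set.Ioo (-π) π))) := by
  refine ⟨(2 * π) ^ (1 - (1 / q).toReal), Real.rpow_pos_of_pos (by positivity) _, ?_⟩
  intro K Ainf A1 W hK hKinf hK1 hW hWfin
  set ν : Measure ℝ := volume.restrict (Set.Ioo (-π) π) with hν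
  have hνuniv : ν Set.univ = ENNReal.ofReal (2 * π) := by
    rw [hν, Measure.restrict_apply_univ, Real.volume_Ioo]
    ring_nf
  have haeIcc : ∀ᵐ y ∂ν, y ∈ Set.Icc (-π) π :=
    (ae_restrict_mem measurableSet_Ioo).mono fun y hy => Set.Ioo_subset_Icc_self hy
  have hKym : ∀ m : ℤ, Measurable fun y => ENNReal.ofReal |K m y| := fun m =>
    ((hK.comp measurable_prodMk_left).abs).ennreal_ofReal
  have hWm : ∀ k : ℤ, AEMeasurable (fun y => ENNReal.ofReal |W k y|) ν := fun k =>
    ((hW k).aestronglyMeasurable.enorm).congr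
      (ae_of_all _ fun y => (Real.enorm_eq_ofReal_abs _))
  have hprod : ∀ j k : ℤ, ∀ y : ℝ,
      ENNReal.ofReal |K (j - k) y * W k y|
        = ENNReal.ofReal |K (j - k) y| * ENNReal.ofReal |W k y| := by
    intro j k y
    rw [abs_mul, ENNReal.ofReal_mul (abs_nonneg _)]
  have hstep1 : ∀ j : ℤ,
      ENNReal.ofReal |∑' k : ℤ, ∫ y in Set.Ioo (-π) π, K (j - k) y * W k y|
        ≤ ∑' k : ℤ, ∫⁻ y, ENNReal.ofReal |K (j - k) y| * ENNReal.ofReal |W k y| ∂ν := by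
    intro j
    refine (ofReal_abs_tsum_le _).trans (ENNReal.tsum_le_tsum fun k => ?_)
    refine (ofReal_abs_integral_le _).trans_eq ?_
    exact lintegral_congr fun y => hprod j k y
  have hKsum : ∀ᵐ y ∂ν, ∑' m : ℤ, ENNReal.ofReal |K m y| ≤ ENNReal.ofReal A1 := by
    filter_upwards [haeIcc] with y hy
    rw [← ENNReal.ofReal_tsum_of_nonneg (fun m => abs_nonneg _) (hK1 y hy).1]
    exact ENNReal.ofReal_le_ofReal (hK1 y hy).2
  have hKint : ∀ j : ℤ, ∑' k : ℤ, ∫⁻ y, ENNReal.ofReal |K (j - k) y| ∂ν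
      ≤ ENNReal.ofReal (2 * π) * ENNReal.ofReal A1 := by
    intro j
    rw [← lintegral_tsum fun k => (hKym (j - k)).aemeasurable]
    have h1 : ∀ y : ℝ, ∑' k : ℤ, ENNReal.ofReal |K (j - k) y|
        = ∑' m : ℤ, ENNReal.ofReal |K m y| := fun y =>
      (Equiv.subLeft j).tsum_eq (fun m => ENNReal.ofReal |K m y|)
    calc ∫⁻ y, ∑' k : ℤ, ENNReal.ofReal |K (j - k) y| ∂ν
        = ∫⁻ y, ∑' m : ℤ, ENNReal.ofReal |K m y| ∂ν := lintegral_congr h1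
      _ ≤ ∫⁻ _, ENNReal.ofReal A1 ∂ν := lintegral_mono_ae (hKsum.mono fun y hy => hy)
      _ = ENNReal.ofReal A1 * ν Set.univ := by rw [lintegral_const]
      _ = ENNReal.ofReal (2 * π) * ENNReal.ofReal A1 := by rw [hνuniv, mul_comm]
  by_cases hqT : q = ∞
  · -- q = ∞ ⟹ r = 1, p = ∞
    have hrT : (1:ℝ≥0∞) / r = 1 := by
      have h1 : (1:ℝ≥0∞) / r ≤ 1 := by
        rw [one_div, ENNReal.inv_le_one]; exact hr1
      have h2 : (1:ℝ≥0∞) ≤ 1 / r := by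
        calc (1:ℝ≥0∞) ≤ 1 + 1 / p := le_self_add
        _ = 1 / q + 1 / r := hpqr
        _ = 1 / r := by rw [hqT]; simp
      exact le_antisymm h1 h2
    have hr' : r = 1 := by rw [one_div, ENNReal.inv_eq_one] at hrT; exact hrT
    have hpT : p = ∞ := by
      have h3 : 1 + 1 / p = 1 + 0 := by rw [hpqr, hqT, hrT]; simp
      rw [ENNReal.add_right_inj ENNReal.one_ne_top] at h3
      rwa [one_div, ENNReal.inv_eq_zero] at h3
    rw [lqNormSeq, if_pos hqT] at hWfin
    rw [lqNormSeq, lqNormSeq, if_pos hpT, if_pos hqT]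
    rw [hqT] at hWfin
    rw [hqT, hpT, hr']
    have he1 : ((1:ℝ≥0∞) / ∞ - 1 / ∞).toReal = 0 := by simp
    have he2 : ((1:ℝ≥0∞) / 1).toReal = 1 := by simp
    have he3 : ENNReal.ofReal ((2 * π) ^ (1 - (1 / (∞:ℝ≥0∞)).toReal))
        = ENNReal.ofReal (2 * π) := by
      have : (1 : ℝ) - (1 / (∞:ℝ≥0∞)).toReal = 1 := by simp
      rw [this, Real.rpow_one]
    rw [he1, he2, he3, ENNReal.rpow_zero, ENNReal.rpow_one, mul_one]
    set NQ := ⨆ k, eLpNorm (W k) ∞ ν with hNQ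
    refine iSup_le fun j => ?_
    refine (hstep1 j).trans ?_
    have hWbd : ∀ k : ℤ, ∫⁻ y, ENNReal.ofReal |K (j - k) y| * ENNReal.ofReal |W k y| ∂ν
        ≤ (∫⁻ y, ENNReal.ofReal |K (j - k) y| ∂ν) * NQ := by
      intro k
      rw [← lintegral_mul_const NQ (hKym (j - k))]
      refine lintegral_mono_ae ?_
      filter_upwards [enorm_ae_le_eLpNormEssSup (W k) ν] with y hy
      refine mul_le_mul_right ?_ _
      rw [← Real.enorm_eq_ofReal_abs]
      exact hy.trans ((eLpNorm_exponent_top (f := W k) (μ := ν) ▸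
        le_iSup (fun k => eLpNorm (W k) ∞ ν) k))
    calc ∑' k : ℤ, ∫⁻ y, ENNReal.ofReal |K (j - k) y| * ENNReal.ofReal |W k y| ∂ν
        ≤ ∑' k : ℤ, (∫⁻ y, ENNReal.ofReal |K (j - k) y| ∂ν) * NQ :=
          ENNReal.tsum_le_tsum hWbd
      _ = (∑' k : ℤ, ∫⁻ y, ENNReal.ofReal |K (j - k) y| ∂ν) * NQ :=
          ENNReal.tsum_mul_right
      _ ≤ ENNReal.ofReal (2 * π) * ENNReal.ofReal A1 * NQ :=
          mul_le_mul_left (hKint j) _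
  · by_cases hrT : r = ∞
    · -- r = ∞ ⟹ q = 1, p = ∞
      have hqOne : (1:ℝ≥0∞) / q = 1 := by
        have h1 : (1:ℝ≥0∞) / q ≤ 1 := by
          rw [one_div, ENNReal.inv_le_one]; exact hq1
        have h2 : (1:ℝ≥0∞) ≤ 1 / q := by
          calc (1:ℝ≥0∞) ≤ 1 + 1 / p := le_self_add
          _ = 1 / q + 1 / r := hpqr
          _ = 1 / q := by rw [hrT]; simp
        exact le_antisymm h1 h2
      have hq' : q = 1 := by rw [one_div, ENNReal.inv_eq_one] at hqOne; exact hqOne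
      have hpT : p = ∞ := by
        have h3 : 1 + 1 / p = 1 + 0 := by rw [hpqr, hqOne, hrT]; simp
        rw [ENNReal.add_right_inj ENNReal.one_ne_top] at h3
        rwa [one_div, ENNReal.inv_eq_zero] at h3
      rw [lqNormSeq, lqNormSeq, if_pos hpT, if_neg (hq' ▸ ENNReal.one_ne_top)]
      rw [hq', hrT, hpT]
      have he1 : ((1:ℝ≥0∞) / 1 - 1 / ∞).toReal = 1 := by simp
      have he2 : ((1:ℝ≥0∞) / ∞).toReal = 0 := by simp
      have he3 : ENNReal.ofReal ((2 * π) ^ (1 - (1 / (1:ℝ≥0∞)).toReal)) = 1 := by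
        norm_num
      rw [he1, he2, he3, ENNReal.rpow_zero, ENNReal.rpow_one, mul_one, one_mul]
      have he4 : ((1:ℝ≥0∞)).toReal = 1 := by simp
      rw [he4]
      simp only [ENNReal.rpow_one, ne_eq, one_ne_zero, not_false_eq_true, div_self,
        ENNReal.rpow_one]
      have hNQ : (∑' k, eLpNorm (W k) 1 ν)
          = ∑' k : ℤ, ∫⁻ y, ENNReal.ofReal |W k y| ∂ν := by
        refine tsum_congr fun k => ?_
        rw [eLpNorm_one_eq_lintegral_enorm]
        exact lintegral_congr fun y => Real.enorm_eq_ofReal_abs _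
      refine iSup_le fun j => ?_
      refine (hstep1 j).trans ?_
      have hKbd : ∀ k : ℤ, ∫⁻ y, ENNReal.ofReal |K (j - k) y| * ENNReal.ofReal |W k y| ∂ν
          ≤ ENNReal.ofReal Ainf * ∫⁻ y, ENNReal.ofReal |W k y| ∂ν := by
        intro k
        rw [← lintegral_const_mul' (ENNReal.ofReal Ainf) _ ENNReal.ofReal_ne_top]
        refine lintegral_mono_ae ?_
        filter_upwards [haeIcc] with y hy
        exact mul_le_mul_left (ENNReal.ofReal_le_ofReal (hKinf (j - k) y hy)) _
      calc ∑' k : ℤ, ∫⁻ y, ENNReal.ofReal |K (j - k) y| * ENNReal.ofReal |W k y| ∂ν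
          ≤ ∑' k : ℤ, ENNReal.ofReal Ainf * ∫⁻ y, ENNReal.ofReal |W k y| ∂ν :=
            ENNReal.tsum_le_tsum hKbd
        _ = ENNReal.ofReal Ainf * ∑' k : ℤ, ∫⁻ y, ENNReal.ofReal |W k y| ∂ν :=
            ENNReal.tsum_mul_left
        _ = ENNReal.ofReal Ainf * ∑' k, eLpNorm (W k) 1 ν := by rw [hNQ]
    · -- main case : q, r finite
      have hp0 : p ≠ 0 := (zero_lt_one.trans_le (hq1.trans hqp)).ne'
      have hq0 : q ≠ 0 := (zero_lt_one.trans_le hq1).ne'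
      have hr0 : r ≠ 0 := (zero_lt_one.trans_le hr1).ne'
      set qq := q.toReal with hqq
      set rr := r.toReal with hrr
      have hqq1 : 1 ≤ qq := by
        rw [hqq, ← ENNReal.toReal_one]; exact ENNReal.toReal_mono hqT hq1
      have hrr1 : 1 ≤ rr := by
        rw [hrr, ← ENNReal.toReal_one]; exact ENNReal.toReal_mono hrT hr1
      have hqq0 : qq ≠ 0 := by positivity
      have hrr0 : rr ≠ 0 := by positivity
      set ip := ((1:ℝ≥0∞)/p).toReal with hipdef
      set iq := ((1:ℝ≥0∞)/q).toReal with hiqdef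
      set ir := ((1:ℝ≥0∞)/r).toReal with hirdef
      have hiq : iq = qq⁻¹ := by rw [hiqdef, one_div, ENNReal.toReal_inv, hqq]
      have hir : ir = rr⁻¹ := by rw [hirdef, one_div, ENNReal.toReal_inv, hrr]
      have hip0 : 0 ≤ ip := ENNReal.toReal_nonneg
      have hiq1 : iq ≤ 1 := by
        rw [hiq]; exact inv_le_one_of_one_le₀ hqq1
      have hir1 : ir ≤ 1 := by
        rw [hir]; exact inv_le_one_of_one_le₀ hrr1
      have hih : ip + 1 = iq + ir := by
        have h1p : (1:ℝ≥0∞)/p ≠ ⊤ := by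
          rw [one_div]; exact ENNReal.inv_ne_top.mpr hp0
        have h1q : (1:ℝ≥0∞)/q ≠ ⊤ := by
          rw [one_div]; exact ENNReal.inv_ne_top.mpr hq0
        have h1r : (1:ℝ≥0∞)/r ≠ ⊤ := by
          rw [one_div]; exact ENNReal.inv_ne_top.mpr hr0
        have h := congrArg ENNReal.toReal hpqr
        rw [ENNReal.toReal_add ENNReal.one_ne_top h1p,
          ENNReal.toReal_add h1q h1r, ENNReal.toReal_one] at h
        linarith [h]
      -- measures and measurable versions
      set μ : Measure (ℤ × ℝ) := (Measure.count : Measure ℤ).prod ν with hμ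
      set W' : ℤ → ℝ → ℝ :=
        fun k => ((hW k).aestronglyMeasurable.aemeasurable).mk (W k) with hW'def
      have hW'm : ∀ k, Measurable (W' k) := fun k =>
        ((hW k).aestronglyMeasurable.aemeasurable).measurable_mk
      have hW'ae : ∀ k, W k =ᵐ[ν] W' k := fun k =>
        ((hW k).aestronglyMeasurable.aemeasurable).ae_eq_mk
      have hgmeas : Measurable fun z : ℤ × ℝ => ENNReal.ofReal |W' z.1 z.2| := by
        have hm : Measurable fun z : ℝ × ℤ => W' z.2 z.1 :=
          measurable_from_prod_countable_left fun k => hW'm k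
        exact ((hm.comp measurable_swap).abs).ennreal_ofReal
      have hgae : (fun z : ℤ × ℝ => ENNReal.ofReal |W z.1 z.2|)
          =ᵐ[μ] fun z : ℤ × ℝ => ENNReal.ofReal |W' z.1 z.2| := by
        have h0 : ∀ k : ℤ, ν (toMeasurable ν {y | W k y ≠ W' k y}) = 0 := by
          intro k
          rw [measure_toMeasurable]
          exact ae_iff.mp (hW'ae k)
        have hsub : {z : ℤ × ℝ |
              ¬ ENNReal.ofReal |W z.1 z.2| = ENNReal.ofReal |W' z.1 z.2|}
            ⊆ ⋃ k : ℤ, ({k} : Set ℤ) ×ˢ (toMeasurable ν {y | W k y ≠ W' k y}) := by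
          intro z hz
          refine Set.mem_iUnion.mpr ⟨z.1, ?_⟩
          refine ⟨rfl, subset_toMeasurable _ _ ?_⟩
          intro h
          exact hz (by simp [Set.mem_setOf_eq] at h ⊢; rw [h])
        refine measure_mono_null hsub ?_
        refine le_antisymm ((measure_iUnion_le _).trans ?_) zero_le
        have hz : ∀ k : ℤ, μ (({k} : Set ℤ) ×ˢ (toMeasurable ν {y | W k y ≠ W' k y})) = 0 := by
          intro k
          rw [hμ, Measure.prod_prod, h0 k, mul_zero]
        simp only [hz, tsum_zero, le_refl]
      have hgaem : AEMeasurable (fun z : ℤ × ℝ => ENNReal.ofReal |W z.1 z.2|) μ :=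
        ⟨_, hgmeas, hgae⟩
      have hfjm : ∀ j : ℤ, Measurable fun z : ℤ × ℝ => ENNReal.ofReal |K (j - z.1) z.2| := by
        intro j
        have hm : Measurable fun z : ℤ × ℝ => (j - z.1, z.2) :=
          ((measurable_of_countable _).comp measurable_fst).prodMk measurable_snd
        exact ((hK.comp hm).abs).ennreal_ofReal
      have hTon : ∀ F : ℤ × ℝ → ℝ≥0∞, AEMeasurable F μ →
          ∫⁻ z, F z ∂μ = ∑' k : ℤ, ∫⁻ y, F (k, y) ∂ν := by
        intro F hF
        rw [hμ, lintegral_prod _ hF, lintegral_count]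
      set Ai := ENNReal.ofReal Ainf with hAi
      set A := ENNReal.ofReal A1 with hA
      set D := Ai ^ (rr - 1) * A with hD
      have hDtop : D ≠ ⊤ :=
        ENNReal.mul_ne_top (ENNReal.rpow_ne_top_of_nonneg (by linarith) ENNReal.ofReal_ne_top)
          ENNReal.ofReal_ne_top
      have hDpt : ∀ᵐ y ∂ν, ∑' m : ℤ, ENNReal.ofReal |K m y| ^ rr ≤ D := by
        filter_upwards [haeIcc, hKsum] with y hy hsum
        calc ∑' m : ℤ, ENNReal.ofReal |K m y| ^ rr
            ≤ ∑' m : ℤ, Ai ^ (rr - 1) * ENNReal.ofReal |K m y| := by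
              refine ENNReal.tsum_le_tsum fun m => ?_
              have hsplit : ENNReal.ofReal |K m y| ^ rr
                  = ENNReal.ofReal |K m y| ^ (rr - 1) * ENNReal.ofReal |K m y| := by
                conv_lhs => rw [show rr = (rr - 1) + 1 by ring]
                rw [ENNReal.rpow_add_of_nonneg _ _ (by linarith) zero_le_one, ENNReal.rpow_one]
              rw [hsplit]
              exact mul_le_mul_left
                (ENNReal.rpow_le_rpow (ENNReal.ofReal_le_ofReal (hKinf m y hy)) (by linarith)) _
          _ = Ai ^ (rr - 1) * ∑' m : ℤ, ENNReal.ofReal |K m y| := ENNReal.tsum_mul_left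
          _ ≤ Ai ^ (rr - 1) * A := mul_le_mul_right hsum _
      set g : ℤ × ℝ → ℝ≥0∞ := fun z => ENNReal.ofReal |W z.1 z.2| with hg
      set f : ℤ → ℤ × ℝ → ℝ≥0∞ := fun j z => ENNReal.ofReal |K (j - z.1) z.2| with hf
      set T : ℤ → ℝ≥0∞ := fun j => ∫⁻ z, f j z ^ rr * g z ^ qq ∂μ with hT
      set N : ℝ≥0∞ := ∫⁻ z, g z ^ qq ∂μ with hN
      set E := ENNReal.ofReal (2 * π) with hE
      set B := E * D with hB
      set NQ := lqNormSeq q fun k => eLpNorm (W k) q ν with hNQ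
      -- N = NQ ^ qq
      have hN2 : N = ∑' k : ℤ, ∫⁻ y, ENNReal.ofReal |W k y| ^ qq ∂ν := by
        rw [hN]; exact hTon _ (hgaem.pow_const qq)
      have hWlp : ∀ k : ℤ, ∫⁻ y, ENNReal.ofReal |W k y| ^ qq ∂ν
          = eLpNorm (W k) q ν ^ qq := by
        intro k
        rw [eLpNorm_eq_lintegral_rpow_enorm_toReal hq0 hqT, ← ENNReal.rpow_mul, one_div,
          inv_mul_cancel₀ hqq0, ENNReal.rpow_one]
        exact lintegral_congr fun y => by rw [Real.enorm_eq_ofReal_abs]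
      have hNq : N = NQ ^ qq := by
        rw [hNQ, lqNormSeq, if_neg hqT, ← ENNReal.rpow_mul, one_div,
          inv_mul_cancel₀ hqq0, ENNReal.rpow_one, hN2]
        exact tsum_congr fun k => hWlp k
      -- M bound
      have hMj : ∀ j : ℤ, ∫⁻ z, f j z ^ rr ∂μ ≤ B := by
        intro j
        rw [hTon _ ((hfjm j).pow_const rr).aemeasurable]
        calc ∑' k : ℤ, ∫⁻ y, f j (k, y) ^ rr ∂ν
            = ∫⁻ y, ∑' k : ℤ, ENNReal.ofReal |K (j - k) y| ^ rr ∂ν :=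
              (lintegral_tsum fun k => ((hKym (j - k)).pow_const rr).aemeasurable).symm
          _ = ∫⁻ y, ∑' m : ℤ, ENNReal.ofReal |K m y| ^ rr ∂ν :=
              lintegral_congr fun y =>
                (Equiv.subLeft j).tsum_eq (fun m => ENNReal.ofReal |K m y| ^ rr)
          _ ≤ ∫⁻ _, D ∂ν := lintegral_mono_ae (hDpt.mono fun y hy => hy)
          _ = D * ν Set.univ := lintegral_const D
          _ = B := by rw [hνuniv, hB, hE, mul_comm]
      -- pointwise Hölder splitting identity
      have hpt : ∀ x w : ℝ≥0∞,
          (x ^ rr * w ^ qq) ^ ip * (x ^ rr) ^ (1 - iq) * (w ^ qq) ^ (1 - ir) = x * w := by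
        intro x w
        have e1 : rr * ip + rr * (1 - iq) = 1 := by
          have e0 : ip + (1 - iq) = ir := by linarith
          calc rr * ip + rr * (1 - iq) = rr * (ip + (1 - iq)) := by ring
            _ = rr * ir := by rw [e0]
            _ = 1 := by rw [hir]; exact mul_inv_cancel₀ hrr0
        have e2 : qq * ip + qq * (1 - ir) = 1 := by
          have e0 : ip + (1 - ir) = iq := by linarith
          calc qq * ip + qq * (1 - ir) = qq * (ip + (1 - ir)) := by ring
            _ = qq * iq := by rw [e0]
            _ = 1 := by rw [hiq]; exact mul_inv_cancel₀ hqq0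
        rw [ENNReal.mul_rpow_of_nonneg _ _ hip0, ← ENNReal.rpow_mul,
          ← ENNReal.rpow_mul, ← ENNReal.rpow_mul, ← ENNReal.rpow_mul]
        calc x ^ (rr * ip) * w ^ (qq * ip) * x ^ (rr * (1 - iq)) * w ^ (qq * (1 - ir))
            = (x ^ (rr * ip) * x ^ (rr * (1 - iq)))
                * (w ^ (qq * ip) * w ^ (qq * (1 - ir))) := by ring
          _ = x ^ (rr * ip + rr * (1 - iq)) * w ^ (qq * ip + qq * (1 - ir)) := by
              rw [ENNReal.rpow_add_of_nonneg _ _ (by positivity) (by nlinarith),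
                ENNReal.rpow_add_of_nonneg _ _ (by positivity) (by nlinarith)]
          _ = x * w := by rw [e1, e2, ENNReal.rpow_one, ENNReal.rpow_one]
      -- Hölder's inequality
      have hHolder : ∀ j : ℤ, ∫⁻ z, f j z * g z ∂μ
          ≤ T j ^ ip * B ^ (1 - iq) * N ^ (1 - ir) := by
        intro j
        classical
        set F : Fin 3 → ℤ × ℝ → ℝ≥0∞ :=
          ![fun z => f j z ^ rr * g z ^ qq, fun z => f j z ^ rr, fun z => g z ^ qq] with hF
        set θ : Fin 3 → ℝ := ![ip, 1 - iq, 1 - ir] with hθ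
        have hFm : ∀ i ∈ Finset.univ, AEMeasurable (F i) μ := by
          intro i _
          fin_cases i
          · exact (((hfjm j).pow_const rr).aemeasurable).mul (hgaem.pow_const qq)
          · exact ((hfjm j).pow_const rr).aemeasurable
          · exact hgaem.pow_const qq
        have hθ1 : ∑ i, θ i = 1 := by
          simp [hθ, Fin.sum_univ_three]; linarith
        have hθ0 : ∀ i ∈ Finset.univ, 0 ≤ θ i := by
          intro i _
          fin_cases i
          · exact hip0
          · simpa [hθ] using by linarith
          · simpa [hθ] using by linarith
        have hmain := ENNReal.lintegral_prod_norm_pow_le (μ := μ) Finset.univ hFm hθ1 hθ0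
        have hL : ∫⁻ z, ∏ i, F i z ^ θ i ∂μ = ∫⁻ z, f j z * g z ∂μ := by
          refine lintegral_congr fun z => ?_
          rw [Fin.prod_univ_three]
          simpa [hF, hθ] using hpt (f j z) (g z)
        have hR : ∏ i, (∫⁻ z, F i z ∂μ) ^ θ i
            = T j ^ ip * (∫⁻ z, f j z ^ rr ∂μ) ^ (1 - iq) * N ^ (1 - ir) := by
          rw [Fin.prod_univ_three]
          simp [hF, hθ, hT, hN]
        calc ∫⁻ z, f j z * g z ∂μ = ∫⁻ z, ∏ i, F i z ^ θ i ∂μ := hL.symm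
          _ ≤ ∏ i, (∫⁻ z, F i z ∂μ) ^ θ i := hmain
          _ = T j ^ ip * (∫⁻ z, f j z ^ rr ∂μ) ^ (1 - iq) * N ^ (1 - ir) := hR
          _ ≤ T j ^ ip * B ^ (1 - iq) * N ^ (1 - ir) := by
              refine mul_le_mul_left (mul_le_mul_right ?_ _) _
              exact ENNReal.rpow_le_rpow (hMj j) (by linarith)
      -- per-index bound
      have hS : ∀ j : ℤ,
          ENNReal.ofReal |∑' k : ℤ, ∫ y in Set.Ioo (-π) π, K (j - k) y * W k y|
            ≤ T j ^ ip * B ^ (1 - iq) * N ^ (1 - ir) := by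
        intro j
        refine (hstep1 j).trans ?_
        refine le_trans (le_of_eq ?_) (hHolder j)
        exact (hTon _ ((hfjm j).aemeasurable.mul hgaem)).symm
      -- sum of T's
      have hTsum : ∑' j : ℤ, T j ≤ D * N := by
        have hTj : ∀ j : ℤ, T j
            = ∑' k : ℤ, ∫⁻ y, ENNReal.ofReal |K (j - k) y| ^ rr
                * ENNReal.ofReal |W k y| ^ qq ∂ν := by
          intro j
          rw [hT]
          exact hTon _ ((((hfjm j).pow_const rr).aemeasurable).mul (hgaem.pow_const qq))
        calc ∑' j : ℤ, T j
            = ∑' j : ℤ, ∑' k : ℤ, ∫⁻ y, ENNReal.ofReal |K (j - k) y| ^ rr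
                * ENNReal.ofReal |W k y| ^ qq ∂ν := tsum_congr hTj
          _ = ∑' k : ℤ, ∑' j : ℤ, ∫⁻ y, ENNReal.ofReal |K (j - k) y| ^ rr
                * ENNReal.ofReal |W k y| ^ qq ∂ν := ENNReal.tsum_comm
          _ = ∑' k : ℤ, ∫⁻ y, (∑' j : ℤ, ENNReal.ofReal |K (j - k) y| ^ rr)
                * ENNReal.ofReal |W k y| ^ qq ∂ν := by
              refine tsum_congr fun k => ?_
              rw [← lintegral_tsum fun jj => (show AEMeasurable (fun y => ENNReal.ofReal
                |K (jj - k) y| ^ rr * ENNReal.ofReal |W k y| ^ qq) ν from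
                (((hKym (jj - k)).pow_const rr).aemeasurable).mul ((hWm k).pow_const qq))]
              exact lintegral_congr fun y => ENNReal.tsum_mul_right
          _ ≤ ∑' k : ℤ, ∫⁻ y, D * ENNReal.ofReal |W k y| ^ qq ∂ν := by
              refine ENNReal.tsum_le_tsum fun k => lintegral_mono_ae ?_
              filter_upwards [hDpt] with y hy
              have hre : ∑' j : ℤ, ENNReal.ofReal |K (j - k) y| ^ rr
                  = ∑' m : ℤ, ENNReal.ofReal |K m y| ^ rr :=
                (Equiv.subRight k).tsum_eq (fun m => ENNReal.ofReal |K m y| ^ rr)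
              rw [hre]
              exact mul_le_mul_left hy _
          _ = D * ∑' k : ℤ, ∫⁻ y, ENNReal.ofReal |W k y| ^ qq ∂ν := by
              rw [← ENNReal.tsum_mul_left]
              exact tsum_congr fun k => lintegral_const_mul' _ _ hDtop
          _ = D * N := by rw [hN2]
      have hir0 : (0:ℝ) ≤ ir := by rw [hir]; positivity
      have hiq0 : (0:ℝ) ≤ iq := by rw [hiq]; positivity
      have h1iq : (0:ℝ) ≤ 1 - iq := by linarith
      have h1ir : (0:ℝ) ≤ 1 - ir := by linarith
      -- rewrite the right-hand side
      have hC : ENNReal.ofReal ((2 * π) ^ (1 - iq)) = E ^ (1 - iq) := by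
        rw [hE]; exact (ENNReal.ofReal_rpow_of_pos (by positivity)).symm
      have hsub : ((1:ℝ≥0∞) / q - 1 / p).toReal = iq - ip := by
        rw [hiqdef, hipdef]
        refine ENNReal.toReal_sub_of_le ?_ ?_
        · rw [one_div, one_div]; exact ENNReal.inv_le_inv.mpr hqp
        · rw [one_div]; exact ENNReal.inv_ne_top.mpr hq0
      have hDir : D ^ ir = Ai ^ (iq - ip) * A ^ ir := by
        rw [hD, ENNReal.mul_rpow_of_nonneg _ _ hir0, ← ENNReal.rpow_mul]
        congr 2
        have h6 : (rr - 1) * ir = 1 - ir := by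
          rw [hir]; field_simp
        rw [h6]; linarith
      have hNiq : N ^ iq = NQ := by
        rw [hNq, ← ENNReal.rpow_mul, hiq, mul_inv_cancel₀ hqq0, ENNReal.rpow_one]
      have hfinal : E ^ (1 - iq) * D ^ ir * N ^ iq
          ≤ ENNReal.ofReal ((2 * π) ^ (1 - iq))
              * Ai ^ ((1:ℝ≥0∞) / q - 1 / p).toReal * A ^ ir * NQ := by
        rw [hC, hsub, hDir, hNiq]; ring_nf; exact le_refl _
      by_cases hpT : p = ∞
      · rw [lqNormSeq, if_pos hpT]
        refine le_trans (iSup_le fun j => ?_) hfinal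
        have hip' : ip = 0 := by rw [hipdef, hpT]; simp
        refine (hS j).trans ?_
        rw [hip', ENNReal.rpow_zero, one_mul]
        rw [show (1:ℝ) - iq = ir by linarith, show (1:ℝ) - ir = iq by linarith,
          hB, ENNReal.mul_rpow_of_nonneg _ _ hir0]
      · set pp := p.toReal with hpp
        have hppne : pp ≠ 0 := ENNReal.toReal_ne_zero.mpr ⟨hp0, hpT⟩
        have hppnn : (0:ℝ) ≤ pp := ENNReal.toReal_nonneg
        have hipp : ip = pp⁻¹ := by rw [hipdef, one_div, ENNReal.toReal_inv, hpp]
        have hppip : pp * ip = 1 := by rw [hipp]; exact mul_inv_cancel₀ hppne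
        have hkey : ∀ x : ℝ≥0∞, (x ^ pp) ^ ip = x := fun x => by
          rw [← ENNReal.rpow_mul, hppip, ENNReal.rpow_one]
        have hkey2 : ∀ x : ℝ≥0∞, (x ^ ip) ^ pp = x := fun x => by
          rw [← ENNReal.rpow_mul, mul_comm ip pp, hppip, ENNReal.rpow_one]
        rw [lqNormSeq, if_neg hpT]
        refine le_trans ?_ hfinal
        have e3 : ir * pp = 1 + (1 - iq) * pp := by
          have h5 : ir = ip + (1 - iq) := by linarith
          calc ir * pp = ip * pp + (1 - iq) * pp := by rw [h5]; ring
            _ = 1 + (1 - iq) * pp := by rw [mul_comm ip pp, hppip]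
        have e4 : iq * pp = 1 + (1 - ir) * pp := by
          have h5 : iq = ip + (1 - ir) := by linarith
          calc iq * pp = ip * pp + (1 - ir) * pp := by rw [h5]; ring
            _ = 1 + (1 - ir) * pp := by rw [mul_comm ip pp, hppip]
        have hinner : ∀ d n e : ℝ≥0∞, (d * n) * ((e * d) ^ (1 - iq)) ^ pp * (n ^ (1 - ir)) ^ pp
            = (e ^ (1 - iq) * d ^ ir * n ^ iq) ^ pp := by
          intro d n e
          have hR : (e ^ (1 - iq) * d ^ ir * n ^ iq) ^ pp
              = e ^ ((1 - iq) * pp) * (d * d ^ ((1 - iq) * pp)) * (n * n ^ ((1 - ir) * pp)) := by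
            rw [ENNReal.mul_rpow_of_nonneg _ _ hppnn, ENNReal.mul_rpow_of_nonneg _ _ hppnn,
              ← ENNReal.rpow_mul e, ← ENNReal.rpow_mul d, ← ENNReal.rpow_mul n,
              e3, e4, ENNReal.rpow_add_of_nonneg _ _ zero_le_one (by positivity),
              ENNReal.rpow_add_of_nonneg _ _ zero_le_one (by positivity),
              ENNReal.rpow_one, ENNReal.rpow_one]
          have hL : (d * n) * ((e * d) ^ (1 - iq)) ^ pp * (n ^ (1 - ir)) ^ pp
              = e ^ ((1 - iq) * pp) * (d * d ^ ((1 - iq) * pp)) * (n * n ^ ((1 - ir) * pp)) := by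
            rw [ENNReal.mul_rpow_of_nonneg e d h1iq, ENNReal.mul_rpow_of_nonneg _ _ hppnn,
              ← ENNReal.rpow_mul e, ← ENNReal.rpow_mul d, ← ENNReal.rpow_mul n]
            ring
          rw [hL, ← hR]
        calc (∑' j : ℤ, ENNReal.ofReal
                |∑' k : ℤ, ∫ y in Set.Ioo (-π) π, K (j - k) y * W k y| ^ pp) ^ (1/pp)
            ≤ (∑' j : ℤ, (T j ^ ip * B ^ (1 - iq) * N ^ (1 - ir)) ^ pp) ^ (1/pp) := by
              refine ENNReal.rpow_le_rpow (ENNReal.tsum_le_tsum fun j => ?_) (by positivity)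
              exact ENNReal.rpow_le_rpow (hS j) hppnn
          _ = ((∑' j : ℤ, T j) * ((B ^ (1 - iq)) ^ pp * (N ^ (1 - ir)) ^ pp)) ^ (1/pp) := by
              congr 1
              rw [← ENNReal.tsum_mul_right]
              refine tsum_congr fun j => ?_
              rw [ENNReal.mul_rpow_of_nonneg _ _ hppnn, ENNReal.mul_rpow_of_nonneg _ _ hppnn,
                hkey2]
              ring
          _ ≤ ((D * N) * ((B ^ (1 - iq)) ^ pp * (N ^ (1 - ir)) ^ pp)) ^ (1/pp) := by
              exact ENNReal.rpow_le_rpow (mul_le_mul_left hTsum _) (by positivity)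
          _ = E ^ (1 - iq) * D ^ ir * N ^ iq := by
              rw [one_div, ← hipp, ← mul_assoc, hB, hinner D N E, hkey]
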